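/- For every integer m ≥ 2, the orbit of the initial value 2^m + 3 under Q goes to infinity: Q^n(2^m + 3) → ∞ as n → ∞. -/

import Mathlib

/-- The divide-or-choose-2 map: `Q n = n/2` if `n` is even, `Q n = n*(n-1)/2` if `n` is odd. -/
def Q (n : ℕ) : ℕ := if n % 2 = 0 then n / 2 else n * (n - 1) / 2

lemma Q_of_odd (x t : ℕ) (h : x = 2 * t + 1) : Q x = x * t := by
  subst h
  unfold Q
  rw [if_neg (by omega)]
  have h1 : (2 * t + 1) - 1 = 2 * t := by omega
  rw [h1]
  have h2 : (2 * t + 1) * (2 * t) = 2 * ((2 * t + 1) * t) := by ring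
  rw [h2, Nat.mul_div_cancel_left _ (by norm_num)]

lemma Q_of_even (w x : ℕ) (hw : 1 ≤ w) : Q (2 ^ w * x) = 2 ^ (w - 1) * x := by
  obtain ⟨w', rfl⟩ : ∃ w', w = w' + 1 := ⟨w - 1, by omega⟩
  unfold Q
  have h1 : 2 ^ (w' + 1) * x = 2 * (2 ^ w' * x) := by ring
  rw [h1, if_pos (by omega), Nat.mul_div_cancel_left _ (by norm_num)]
  simp

lemma iter_down : ∀ (i w x : ℕ), i ≤ w → Q^[i] (2 ^ w * x) = 2 ^ (w - i) * x := by
  intro i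
  induction i with
  | zero => intro w x _; simp
  | succ i ih =>
    intro w x hw
    rw [Function.iterate_succ_apply, Q_of_even w x (by omega), ih (w - 1) x (by omega)]
    congr 2
    omega

lemma decomp (n : ℕ) (h2 : n % 2 = 1) (h3 : 3 ≤ n) :
    ∃ v t, 1 ≤ v ∧ t % 2 = 1 ∧ n - 1 = 2 ^ v * t := by
  have hne : n - 1 ≠ 0 := by omega
  obtain ⟨v, t, ht, heq⟩ := Nat.exists_eq_pow_mul_and_not_dvd hne 2 (by norm_num)
  refine ⟨v, t, ?_, ?_, heq⟩
  · rcases Nat.eq_zero_or_pos v with hv | hv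
    · subst hv; simp at heq; omega
    · exact hv
  · omega

lemma dvd4 (d c : ℕ) (hc : 0 < c) (hce : c % 2 = 0) (h1 : d ∣ 2 * c) (h2 : ¬ d ∣ c) : 4 ∣ d := by
  have hd0 : d ≠ 0 := by
    rintro rfl
    rw [zero_dvd_iff] at h1
    omega
  set g := Nat.gcd d c with hg
  have hgpos : 0 < g := Nat.gcd_pos_of_pos_right d hc
  have hgd : g ∣ d := Nat.gcd_dvd_left d c
  have hgc : g ∣ c := Nat.gcd_dvd_right d c
  have hcop : Nat.Coprime (d / g) (c / g) := Nat.coprime_div_gcd_div_gcd hgpos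
  have hdg : g * (d / g) = d := Nat.mul_div_cancel' hgd
  have hcg : g * (c / g) = c := Nat.mul_div_cancel' hgc
  have hdvd2 : (d / g) ∣ 2 * (c / g) := by
    have h1' : g * (d / g) ∣ g * (2 * (c / g)) := by
      rw [hdg]
      have : g * (2 * (c / g)) = 2 * (g * (c / g)) := by ring
      rw [this, hcg]
      exact h1
    exact (mul_dvd_mul_iff_left (by omega : g ≠ 0)).mp h1'
  have hd2 : (d / g) ∣ 2 := hcop.dvd_of_dvd_mul_right hdvd2
  rcases (Nat.dvd_prime Nat.prime_two).mp hd2 with h | h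
  · exfalso
    apply h2
    have hdeq : d = g := by rw [← hdg, h, mul_one]
    rw [hdeq]
    exact hgc
  · have hdeq : d = 2 * g := by rw [← hdg, h]; ring
    rcases Nat.even_or_odd g with hge | hgo
    · obtain ⟨g2, hgg⟩ := hge; omega
    · exfalso
      apply h2
      have hgodd : Nat.Coprime g 2 := hgo.coprime_two_right
      have h2c : 2 ∣ c := by omega
      have hgc2 : g * 2 ∣ c := hgodd.mul_dvd_of_dvd_of_dvd hgc h2c
      rw [hdeq, mul_comm]
      exact hgc2


-- prime ≡ 3 mod 4 divides any n ≡ 3 mod 4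
lemma ex3 : ∀ n : ℕ, n % 4 = 3 → ∃ p, Nat.Prime p ∧ p ∣ n ∧ p % 4 = 3 := by
  intro n
  induction n using Nat.strong_induction_on with
  | _ n ih =>
    intro hn
    have hn1 : n ≠ 1 := by omega
    have hp : Nat.Prime n.minFac := Nat.minFac_prime hn1
    have hpd : n.minFac ∣ n := Nat.minFac_dvd n
    have hp2 : n.minFac ≠ 2 := by
      intro h
      have : (2 : ℕ) ∣ n := h ▸ hpd
      omega
    have hpodd : n.minFac % 2 = 1 := by
      obtain ⟨j, hj⟩ := hp.odd_of_ne_two hp2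
      omega
    rcases (by omega : n.minFac % 4 = 1 ∨ n.minFac % 4 = 3) with h1 | h3
    · -- recurse on n / minFac
      obtain ⟨m, hm⟩ := hpd
      have hm0 : m ≠ 0 := by rintro rfl; simp at hm; omega
      have hmlt : m < n := by
        have h2le : 2 ≤ n.minFac := hp.two_le
        have h2m : 2 * m ≤ n := by rw [hm]; exact Nat.mul_le_mul_right m h2le
        omega
      have hm4 : m % 4 = 3 := by
        have := Nat.mul_mod n.minFac m 4
        rw [← hm, h1] at this
        omega
      obtain ⟨p, hp', hpd', hp4⟩ := ih m hmlt hm4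
      exact ⟨p, hp', hm ▸ hpd'.mul_left _, hp4⟩
    · exact ⟨n.minFac, hp, hpd, h3⟩

-- p ≡ 3 mod 4, p ∣ 2^k+1 → k odd
lemma A_lem (p k : ℕ) (hp : Nat.Prime p) (hp4 : p % 4 = 3) (h : p ∣ 2 ^ k + 1) : k % 2 = 1 := by
  by_contra hk
  have hk0 : k % 2 = 0 := by omega
  obtain ⟨r, rfl⟩ : ∃ r, k = 2 * r := ⟨k / 2, by omega⟩
  haveI : Fact p.Prime := ⟨hp⟩
  have h0 : ((2 ^ (2 * r) + 1 : ℕ) : ZMod p) = 0 := by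
    rw [ZMod.natCast_eq_zero_iff]
    exact h
  push_cast at h0
  have hneg : (2 : ZMod p) ^ (2 * r) = -1 := by linear_combination h0
  have hsq : IsSquare (-1 : ZMod p) := by
    refine ⟨(2 : ZMod p) ^ r, ?_⟩
    rw [← hneg, two_mul, pow_add]
  rw [ZMod.exists_sq_eq_neg_one_iff] at hsq
  exact hsq hp4

-- 2^k mod 7 cycle
lemma pow2_mod7 (k : ℕ) : 2 ^ k % 7 = 2 ^ (k % 3) % 7 := by
  conv_lhs => rw [← Nat.div_add_mod k 3]
  rw [pow_add, pow_mul, Nat.mul_mod, Nat.pow_mod]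
  norm_num

lemma lem7 (k : ℕ) : ¬ (7 ∣ 2 ^ k + 1) := by
  intro h
  have h1 := pow2_mod7 k
  have h2 : k % 3 < 3 := Nat.mod_lt _ (by norm_num)
  obtain ⟨c, hc⟩ := h
  have h3 : 2 ^ (k % 3) % 7 = 6 := by omega
  set r := k % 3 with hr
  interval_cases r <;> norm_num at h3

lemma pow2_mod5 (k : ℕ) : 2 ^ k % 5 = 2 ^ (k % 4) % 5 := by
  conv_lhs => rw [← Nat.div_add_mod k 4]
  rw [pow_add, pow_mul, Nat.mul_mod, Nat.pow_mod]
  norm_num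

lemma lem5 (k : ℕ) (hk : k % 2 = 1) : ¬ (5 ∣ 2 ^ k + 1) := by
  intro h
  have h1 := pow2_mod5 k
  have h2 : k % 4 < 4 := Nat.mod_lt _ (by norm_num)
  have h24 : k % 4 = 1 ∨ k % 4 = 3 := by omega
  obtain ⟨c, hc⟩ := h
  have h3 : 2 ^ (k % 4) % 5 = 4 := by omega
  rcases h24 with h | h <;> rw [h] at h3 <;> norm_num at h3





lemma rec_step (d₀ n : ℕ) (hd : ∀ k, 1 ≤ k → ¬ d₀ ∣ 2 ^ k + 1)
    (h2 : n % 2 = 1) (h7 : 7 ≤ n) (hdn : d₀ ∣ n) :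
    ∃ j t, 1 ≤ j ∧ 3 ≤ t ∧ t % 2 = 1 ∧ Q^[j] n = t * n ∧ ∀ i, i ≤ j → n ≤ Q^[i] n := by
  obtain ⟨v, t, hv, ht, he⟩ := decomp n h2 (by omega)
  obtain ⟨v', rfl⟩ : ∃ v', v = v' + 1 := ⟨v - 1, by omega⟩
  have hQ : Q n = 2 ^ v' * (t * n) := by
    have hx : n = 2 * (2 ^ v' * t) + 1 := by
      have : (2:ℕ) ^ (v' + 1) * t = 2 * (2 ^ v' * t) := by ring
      omega
    rw [Q_of_odd n (2 ^ v' * t) hx]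
    ring
  have hit : Q^[v' + 1] n = t * n := by
    rw [Function.iterate_succ_apply, hQ, iter_down v' v' (t * n) le_rfl]
    simp
  have ht1 : t ≠ 1 := by
    intro h1
    apply hd (v' + 1) (by omega)
    have hn : 2 ^ (v' + 1) + 1 = n := by
      subst h1
      simp at he
      omega
    rwa [hn]
  have ht3 : 3 ≤ t := by omega
  refine ⟨v' + 1, t, by omega, ht3, ht, hit, ?_⟩
  intro i hi
  rcases Nat.eq_zero_or_pos i with rfl | hip
  · simp
  · obtain ⟨i', rfl⟩ : ∃ i', i = i' + 1 := ⟨i - 1, by omega⟩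
    rw [Function.iterate_succ_apply, hQ, iter_down i' v' (t * n) (by omega)]
    calc n ≤ t * n := Nat.le_mul_of_pos_left n (by omega)
      _ ≤ 2 ^ (v' - i') * (t * n) := Nat.le_mul_of_pos_left _ (by positivity)

lemma lower (d₀ : ℕ) (hd : ∀ k, 1 ≤ k → ¬ d₀ ∣ 2 ^ k + 1) :
    ∀ i n, n % 2 = 1 → 7 ≤ n → d₀ ∣ n → n ≤ Q^[i] n := by
  intro i
  induction i using Nat.strong_induction_on with
  | _ i ih =>
    intro n h2 h7 hdn
    obtain ⟨j, t, hj1, ht3, ht2, hjq, hbnd⟩ := rec_step d₀ n hd h2 h7 hdn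
    by_cases hij : i ≤ j
    · exact hbnd i hij
    · push_neg at hij
      have hieq : i = (i - j) + j := by omega
      rw [hieq, Function.iterate_add_apply, hjq]
      have hmod : (t * n) % 2 = 1 := by
        have := Nat.mul_mod t n 2
        rw [ht2, h2] at this
        omega
      have h7' : 7 ≤ t * n := le_trans h7 (Nat.le_mul_of_pos_left n (by omega))
      have hd' : d₀ ∣ t * n := hdn.mul_left t
      have hrec := ih (i - j) (by omega) (t * n) hmod h7' hd'
      calc n ≤ t * n := Nat.le_mul_of_pos_left n (by omega)
        _ ≤ Q^[i - j] (t * n) := hrec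

lemma grow (d₀ : ℕ) (hd : ∀ k, 1 ≤ k → ¬ d₀ ∣ 2 ^ k + 1) :
    ∀ c n, n % 2 = 1 → 7 ≤ n → d₀ ∣ n →
    ∃ J y, Q^[J] n = y ∧ y % 2 = 1 ∧ 7 ≤ y ∧ d₀ ∣ y ∧ 3 ^ c * n ≤ y := by
  intro c
  induction c with
  | zero =>
    intro n h2 h7 hdn
    exact ⟨0, n, rfl, h2, h7, hdn, by simp⟩
  | succ c ih =>
    intro n h2 h7 hdn
    obtain ⟨J, y, hJ, hy2, hy7, hyd, hyb⟩ := ih n h2 h7 hdn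
    obtain ⟨j, t, hj1, ht3, ht2, hjq, _⟩ := rec_step d₀ y hd hy2 hy7 hyd
    refine ⟨j + J, t * y, ?_, ?_, ?_, ?_, ?_⟩
    · rw [Function.iterate_add_apply, hJ, hjq]
    · have := Nat.mul_mod t y 2
      rw [ht2, hy2] at this
      omega
    · exact le_trans hy7 (Nat.le_mul_of_pos_left y (by omega))
    · exact hyd.mul_left t
    · calc 3 ^ (c + 1) * n = 3 * (3 ^ c * n) := by ring
        _ ≤ 3 * y := Nat.mul_le_mul_left 3 hyb
        _ ≤ t * y := Nat.mul_le_mul_right y ht3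

lemma core (d₀ x : ℕ) (hd : ∀ k, 1 ≤ k → ¬ d₀ ∣ 2 ^ k + 1)
    (h2 : x % 2 = 1) (h7 : 7 ≤ x) (hdx : d₀ ∣ x) :
    Filter.Tendsto (fun j => Q^[j] x) Filter.atTop Filter.atTop := by
  rw [Filter.tendsto_atTop]
  intro b
  rw [Filter.eventually_atTop]
  obtain ⟨J, y, hJ, hy2, hy7, hyd, hyb⟩ := grow d₀ hd b x h2 h7 hdx
  have hby : b ≤ y := by
    have h1 : b < 2 ^ b := Nat.lt_two_pow_self (n := b)
    have h2' : 2 ^ b ≤ 3 ^ b := Nat.pow_le_pow_left (by norm_num) b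
    have h3 : 3 ^ b ≤ 3 ^ b * x := Nat.le_mul_of_pos_right _ (by omega)
    omega
  refine ⟨J, fun j hj => ?_⟩
  have hjeq : j = (j - J) + J := by omega
  rw [hjeq, Function.iterate_add_apply, hJ]
  exact le_trans hby (lower d₀ hd (j - J) y hy2 hy7 hyd)

lemma shift (x i₀ : ℕ)
    (h : Filter.Tendsto (fun j => Q^[j] (Q^[i₀] x)) Filter.atTop Filter.atTop) :
    Filter.Tendsto (fun j => Q^[j] x) Filter.atTop Filter.atTop := by
  rw [Filter.tendsto_atTop] at h ⊢
  intro b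
  obtain ⟨N, hN⟩ := Filter.eventually_atTop.mp (h b)
  rw [Filter.eventually_atTop]
  refine ⟨N + i₀, fun j hj => ?_⟩
  have hthis := hN (j - i₀) (by omega)
  rw [← Function.iterate_add_apply] at hthis
  have hje : j - i₀ + i₀ = j := by omega
  rwa [hje] at hthis




-- cast helper : q ∣ 2^c+1  →  (2 : ZMod q)^c = -1
lemma cast_neg_one (q c : ℕ) (h : q ∣ 2 ^ c + 1) : (2 : ZMod q) ^ c = -1 := by
  have h0 : ((2 ^ c + 1 : ℕ) : ZMod q) = 0 := by
    rw [ZMod.natCast_eq_zero_iff]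
    exact h
  push_cast at h0
  linear_combination h0

-- the "forces k even" blocker
lemma Bq (q c : ℕ) (hq3 : 2 < q) (hc : 0 < c) (hce : c % 2 = 0) (hqc : q ∣ 2 ^ c + 1) :
    ∀ k, k % 2 = 1 → ¬ q ∣ 2 ^ k + 1 := by
  haveI : Fact (2 < q) := ⟨hq3⟩
  have h1 : (2 : ZMod q) ^ c = -1 := cast_neg_one q c hqc
  set d := orderOf (2 : ZMod q) with hdd
  have hd2c : d ∣ 2 * c := by
    apply orderOf_dvd_of_pow_eq_one
    rw [mul_comm, pow_mul, h1]
    ring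
  have hndc : ¬ d ∣ c := by
    intro hdc
    have := orderOf_dvd_iff_pow_eq_one.mp hdc
    rw [h1] at this
    exact CharP.neg_one_ne_one (ZMod q) q this
  have h4d : 4 ∣ d := dvd4 d c hc hce hd2c hndc
  intro k hk hqk
  have hk1 : (2 : ZMod q) ^ k = -1 := cast_neg_one q k hqk
  have hd2k : d ∣ 2 * k := by
    apply orderOf_dvd_of_pow_eq_one
    rw [mul_comm, pow_mul, hk1]
    ring
  have : (4:ℕ) ∣ 2 * k := dvd_trans h4d hd2k
  omega

/-- For every integer `m ≥ 2`, the orbit of `2^m + 3` under `Q` goes to infinity. -/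
theorem stmt_17 (m : ℕ) (hm : 2 ≤ m) :
    Filter.Tendsto (fun n : ℕ => Q^[n] (2 ^ m + 3)) Filter.atTop Filter.atTop := by
  set x₀ := 2 ^ m + 3 with hx₀
  have h4 : (2:ℕ) ^ m = 4 * 2 ^ (m - 2) := by
    have : (2:ℕ) ^ m = 2 ^ 2 * 2 ^ (m - 2) := by rw [← pow_add]; congr 1; omega
    simpa using this
  have hpos2 : 0 < (2:ℕ) ^ (m - 2) := pow_pos (by norm_num) _
  have hpos1 : 0 < (2:ℕ) ^ (m - 1) := pow_pos (by norm_num) _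
  have hx4 : x₀ % 4 = 3 := by omega
  have hx2 : x₀ % 2 = 1 := by omega
  have hx7 : 7 ≤ x₀ := by omega
  obtain ⟨p₀, hp₀, hp₀d, hp₀4⟩ := ex3 x₀ hx4
  -- first step : x₀ = 2 * t₀ + 1 with t₀ = 2^(m-1)+1
  set t₀ := 2 ^ (m - 1) + 1 with ht₀
  have h2m : (2:ℕ) ^ m = 2 * 2 ^ (m - 1) := by
    rw [← pow_succ']
    congr 1
    omega
  have hx₀t : x₀ = 2 * t₀ + 1 := by omega
  have hQx₀ : Q x₀ = x₀ * t₀ := Q_of_odd x₀ t₀ hx₀t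
  have ht₀odd : t₀ % 2 = 1 := by
    have h1 : (2:ℕ) ^ (m - 1) = 2 * 2 ^ (m - 2) := by
      rw [← pow_succ']
      congr 1
      omega
    omega
  rcases eq_or_ne m 2 with hm2 | hm2
  · -- m = 2 : start value 7, blocked by 7 itself
    subst hm2
    have h77 : (2:ℕ) ^ 2 + 3 = 7 := by norm_num
    rw [hx₀, h77]
    exact core 7 7 (fun k _ => lem7 k) (by norm_num) le_rfl (dvd_refl 7)
  rcases Nat.even_or_odd m with hme | hmo
  · -- m even, m ≥ 4
    have hm4 : 4 ≤ m := by
      obtain ⟨u, hu⟩ := hme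
      omega
    set A := 2 ^ (m - 2) with hA
    have hAx : x₀ = 4 * A + 3 := by omega
    have hAt₀ : t₀ = 2 * A + 1 := by
      have h1 : (2:ℕ) ^ (m - 1) = 2 * 2 ^ (m - 2) := by
        rw [← pow_succ']
        congr 1
        omega
      omega
    set x₁ := x₀ * t₀ with hx₁
    set t₁ := 4 * (A * A) + 5 * A + 1 with ht₁
    have hx₁t : x₁ = 2 * t₁ + 1 := by
      rw [hx₁, hAx, hAt₀, ht₁]
      ring
    have hQx₁ : Q x₁ = x₁ * t₁ := Q_of_odd x₁ t₁ hx₁t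
    set x₂ := x₁ * t₁ with hx₂
    -- 5 ∣ t₁
    have hA5 : A % 5 = 1 ∨ A % 5 = 4 := by
      have h1 := pow2_mod5 (m - 2)
      have h2 : (m - 2) % 4 = 0 ∨ (m - 2) % 4 = 2 := by
        obtain ⟨u, hu⟩ := hme
        omega
      rcases h2 with h | h <;> rw [h] at h1 <;> norm_num at h1 <;> omega
    have hA2 : (A * A) % 5 = 1 := by
      have hmm := Nat.mul_mod A A 5
      rcases hA5 with h | h <;> rw [h] at hmm <;> norm_num at hmm <;> omega
    have h5t₁ : 5 ∣ t₁ := by omega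
    -- 5 does not divide x₀, so p₀ ≠ 5
    have h5x₀ : ¬ (5:ℕ) ∣ x₀ := by
      intro hdvd
      obtain ⟨c, hc⟩ := hdvd
      rcases hA5 with h | h <;> omega
    have hp₀5 : p₀ ≠ 5 := by
      intro h
      apply h5x₀
      rw [← h]
      exact hp₀d
    set d₀ := p₀ * 5 with hd₀
    have hd : ∀ k, 1 ≤ k → ¬ d₀ ∣ 2 ^ k + 1 := by
      intro k _ hdvd
      have hpk : p₀ ∣ 2 ^ k + 1 := dvd_trans (dvd_mul_right p₀ 5) hdvd
      have h5k : (5:ℕ) ∣ 2 ^ k + 1 := dvd_trans (dvd_mul_left 5 p₀) hdvd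
      exact lem5 k (A_lem p₀ k hp₀ hp₀4 hpk) h5k
    have hd₀x₂ : d₀ ∣ x₂ := by
      apply Nat.Coprime.mul_dvd_of_dvd_of_dvd
      · exact (Nat.coprime_primes hp₀ (by norm_num)).mpr hp₀5
      · exact dvd_trans hp₀d (dvd_trans (dvd_mul_right x₀ t₀) (dvd_mul_right x₁ t₁))
      · exact dvd_trans h5t₁ (dvd_mul_left t₁ x₁)
    have hAe : A % 2 = 0 := by
      have h1 : (2:ℕ) ^ (m - 2) = 2 * 2 ^ (m - 3) := by
        rw [← pow_succ']
        congr 1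
        omega
      omega
    have ht₁odd : t₁ % 2 = 1 := by
      have hmm := Nat.mul_mod A A 2
      rw [hAe] at hmm
      norm_num at hmm
      omega
    have hx₁2 : x₁ % 2 = 1 := by omega
    have hx₂2 : x₂ % 2 = 1 := by
      have hmm := Nat.mul_mod x₁ t₁ 2
      rw [hx₁2, ht₁odd] at hmm
      omega
    have hx₂7 : 7 ≤ x₂ := by
      calc (7:ℕ) ≤ x₀ := hx7
        _ ≤ x₀ * t₀ := Nat.le_mul_of_pos_right _ (by omega)
        _ ≤ x₁ * t₁ := Nat.le_mul_of_pos_right _ (by omega)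
    have hcore := core d₀ x₂ hd hx₂2 hx₂7 hd₀x₂
    apply shift x₀ 2
    have h2it : Q^[2] x₀ = x₂ := by
      have : Q^[2] x₀ = Q (Q x₀) := rfl
      rw [this, hQx₀, hQx₁]
    rw [h2it]
    exact hcore
  · -- m odd, m ≥ 3
    have hm3 : 3 ≤ m := by omega
    have hmo2 : m % 2 = 1 := Nat.odd_iff.mp hmo
    set x₁ := x₀ * t₀ with hx₁
    have ht₀5 : 5 ≤ t₀ := by
      have h1 : (2:ℕ) ^ 2 ≤ 2 ^ (m - 1) := Nat.pow_le_pow_right (by norm_num) (by omega)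
      norm_num at h1
      omega
    set q := t₀.minFac with hq
    have hqp : q.Prime := Nat.minFac_prime (by omega)
    have hqd : q ∣ t₀ := Nat.minFac_dvd t₀
    have hq2 : q ≠ 2 := by
      intro h
      have : (2:ℕ) ∣ t₀ := h ▸ hqd
      omega
    have hq3 : 2 < q := by
      have := hqp.two_le
      omega
    have hqblock : ∀ k, k % 2 = 1 → ¬ q ∣ 2 ^ k + 1 :=
      Bq q (m - 1) hq3 (by omega) (by omega) hqd
    have hp₀q : p₀ ≠ q := by
      intro h
      have h1 : p₀ ∣ 2 * t₀ := Dvd.dvd.mul_left (show p₀ ∣ t₀ by rw [h]; exact hqd) 2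
      have h2 : p₀ ∣ 1 := by
        have := Nat.dvd_sub hp₀d h1
        rwa [hx₀t, Nat.add_sub_cancel_left] at this
      rw [Nat.dvd_one] at h2
      have := hp₀.one_lt
      omega
    set d₀ := p₀ * q with hd₀
    have hd : ∀ k, 1 ≤ k → ¬ d₀ ∣ 2 ^ k + 1 := by
      intro k _ hdvd
      have hpk : p₀ ∣ 2 ^ k + 1 := dvd_trans (dvd_mul_right p₀ q) hdvd
      have hqk : q ∣ 2 ^ k + 1 := dvd_trans (dvd_mul_left q p₀) hdvd
      exact hqblock k (A_lem p₀ k hp₀ hp₀4 hpk) hqk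
    have hd₀x₁ : d₀ ∣ x₁ := by
      apply Nat.Coprime.mul_dvd_of_dvd_of_dvd
      · exact (Nat.coprime_primes hp₀ hqp).mpr hp₀q
      · exact dvd_trans hp₀d (dvd_mul_right x₀ t₀)
      · exact dvd_trans hqd (dvd_mul_left t₀ x₀)
    have hx₁2 : x₁ % 2 = 1 := by
      have := Nat.mul_mod x₀ t₀ 2
      rw [hx2, ht₀odd] at this
      omega
    have hx₁7 : 7 ≤ x₁ := le_trans hx7 (Nat.le_mul_of_pos_right _ (by omega))
    have hcore := core d₀ x₁ hd hx₁2 hx₁7 hd₀x₁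
    apply shift x₀ 1
    have h1it : Q^[1] x₀ = x₁ := by
      simp [hQx₀, hx₁]
    rw [h1it]
    exact hcore
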